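/- Let ρ₁ ≥ ρ₂ ≥ ρ₃ ≥ ω with ρ₃ regular, and ρ₃ ≥ ρ₄ ≥ 2. Then either cf(cov(ρ₁, ρ₂, ρ₃, ρ₄)) < ρ₄ or cf(cov(ρ₁, ρ₂, ρ₃, ρ₄)) ≥ ρ₃. -/

import Mathlib

open Cardinal

noncomputable section

/-- The covering number `cov(ρ₁, ρ₂, ρ₃, ρ₄)`: least cardinality of `X ⊆ P_{ρ₂}(ρ₁)`
such that every `b ∈ P_{ρ₃}(ρ₁)` is covered by the union of fewer than `ρ₄` members of `X`. -/
def cov (r1 r2 r3 r4 : Cardinal) : Cardinal :=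
  sInf { c | ∃ X : Set (Set r1.out),
    (∀ x ∈ X, #x < r2) ∧
    (∀ b : Set r1.out, #b < r3 → ∃ Q : Set (Set r1.out), Q ⊆ X ∧ #Q < r4 ∧ b ⊆ ⋃₀ Q) ∧
    #X = c }

/-- The meeting number `m(ρ, λ)`. -/
def meet (ρ lam : Cardinal) : Cardinal :=
  sInf { c | ∃ Q : Set (Set lam.out),
    (∀ q ∈ Q, #q = ρ) ∧
    (∀ b : Set lam.out, #b = ρ → ∃ q ∈ Q, #(↥(b ∩ q)) = ρ) ∧
    #Q = c }

/-- The density number `d(ρ, λ)`. -/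
def dens (ρ lam : Cardinal) : Cardinal :=
  sInf { c | ∃ Q : Set (Set lam.out),
    (∀ q ∈ Q, #q = ρ) ∧
    (∀ b : Set lam.out, #b = ρ → ∃ q ∈ Q, q ⊆ b) ∧
    #Q = c }

/-- `ds(f)` for `f : λ → ρ`. -/
def ds (ρ lam : Cardinal) (f : lam.out → ρ.out) : Cardinal :=
  sInf { c | ∃ Z : Set (Set lam.out),
    (∀ z ∈ Z, #z = ρ) ∧
    (∀ B : Set lam.out, (∀ α : ρ.out, #(↥(B ∩ f ⁻¹' {α})) = lam) →
      ∃ z ∈ Z, #(↥(f '' (z ∩ B))) = ρ) ∧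
    #Z = c }

/-- The Džamonja–Shelah number `DS(ρ, λ) = sup { ds(f) : f : λ → ρ }`. -/
def DS (ρ lam : Cardinal) : Cardinal := ⨆ f : lam.out → ρ.out, ds ρ lam f

/-- Cofinality of a cardinal. -/
def cf (c : Cardinal) : Cardinal := c.ord.cof

/-- `u(σ, λ) = cov(λ, σ, σ, ω)`. -/
def u (σ lam : Cardinal) : Cardinal := cov lam σ σ ℵ₀

/-- The `o`-th iterated cardinal successor of `c`. -/
def succIter (c : Cardinal) (o : Ordinal) : Cardinal :=
  Cardinal.preAleph (Cardinal.preAleph.symm c + o)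


theorem stmt15 (r1 r2 r3 r4 : Cardinal) (h12 : r2 ≤ r1) (h23 : r3 ≤ r2)
    (h3 : ℵ₀ ≤ r3) (hreg : cf r3 = r3) (h34 : r4 ≤ r3) (h4 : 2 ≤ r4) :
    cf (cov r1 r2 r3 r4) < r4 ∨ r3 ≤ cf (cov r1 r2 r3 r4) := by
  by_cases hlt : cf (cov r1 r2 r3 r4) < r4
  · exact Or.inl hlt
  right
  by_contra hcf
  push_neg at hlt hcf
  set κ := cov r1 r2 r3 r4 with hκdef
  set S : Set Cardinal := { c | ∃ X : Set (Set r1.out),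
    (∀ x ∈ X, #x < r2) ∧
    (∀ b : Set r1.out, #b < r3 → ∃ Q : Set (Set r1.out), Q ⊆ X ∧ #Q < r4 ∧ b ⊆ ⋃₀ Q) ∧
    #X = c } with hSdef
  have hκS : κ = sInf S := rfl
  have h2cf : 2 ≤ cf κ := h4.trans hlt
  -- S is nonempty
  have hSne : S.Nonempty := by
    by_contra h
    rw [Set.not_nonempty_iff_eq_empty] at h
    have : κ = 0 := by rw [hκS, h]; exact Cardinal.sInf_empty
    rw [this] at h2cf
    simp [cf, Ordinal.cof_zero] at h2cf
  -- κ is infinite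
  have hκinf : ℵ₀ ≤ κ := by
    by_contra hfin
    push_neg at hfin
    obtain ⟨n, hn⟩ := Cardinal.lt_aleph0.1 hfin
    have : cf κ ≤ 1 := by
      rw [hn]
      cases n with
      | zero => simp [cf]
      | succ m =>
        have : ((m + 1 : ℕ) : Cardinal).ord = Order.succ (m : Ordinal) := by
          rw [Cardinal.ord_nat]
          exact_mod_cast Ordinal.natCast_succ m
        rw [cf, this, Ordinal.cof_succ]
    exact absurd (h2cf.trans this) (by norm_num)
  have hXmem : κ ∈ S := by rw [hκS]; exact csInf_mem hSne
  obtain ⟨X, hX1, hX2, hXcard⟩ := hXmem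
  -- enumerate X by κ.ord.ToType
  have hmk : #κ.ord.ToType = κ := mk_ord_toType κ
  have he : Nonempty (κ.ord.ToType ≃ ↥X) := Cardinal.eq.1 (by rw [hmk, hXcard])
  obtain ⟨e⟩ := he
  set g : κ.ord.ToType → Set r1.out := fun j => (e j : Set r1.out) with hg
  have hginj : Function.Injective g := fun a b h => e.injective (Subtype.ext h)
  have hgX : ∀ j, g j ∈ X := fun j => (e j).2
  -- initial segments
  set Xi : κ.ord.ToType → Set (Set r1.out) := fun i => g '' {j | j < i} with hXi
  have hXisub : ∀ i, Xi i ⊆ X := by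
    rintro i x ⟨j, _, rfl⟩; exact hgX j
  have hXicard : ∀ i, #(Xi i) < κ := fun i =>
    (mk_image_le).trans_lt (Cardinal.mk_Iio_ord_toType i)
  -- each initial segment fails the covering property
  have hfail : ∀ i, ∃ b : Set r1.out, #b < r3 ∧
      ∀ Q : Set (Set r1.out), Q ⊆ Xi i → #Q < r4 → ¬ b ⊆ ⋃₀ Q := by
    intro i
    by_contra h
    push_neg at h
    have hmem : #(Xi i) ∈ S :=
      ⟨Xi i, fun x hx => hX1 x (hXisub i hx), fun b hb => h b hb, rfl⟩
    have : κ ≤ #(Xi i) := by rw [hκS]; exact csInf_le' hmem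
    exact absurd this (not_le.2 (hXicard i))
  choose b hb1 hb2 using hfail
  -- a cofinal set of size cf κ
  obtain ⟨S0, hS0unb, hS0card⟩ := Order.exists_cof_eq κ.ord.ToType
  rw [Ordinal.cof_toType] at hS0card
  have hS0cf : #↥S0 = cf κ := hS0card
  -- the big set B
  set B : Set r1.out := ⋃ i : ↥S0, b ↑i with hB
  have hBcard : #B < r3 := by
    apply lt_of_le_of_lt (Cardinal.mk_iUnion_le _)
    apply Cardinal.mul_lt_of_lt h3
    · rw [hS0cf]; exact hcf
    · apply Ordinal.iSup_lt
      · rw [hS0cf]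
        have : r3.ord.cof = r3 := hreg
        rw [this]
        exact hcf
      · exact fun i => hb1 ↑i
  obtain ⟨Q, hQX, hQcard, hQcov⟩ := hX2 B hBcard
  -- indices of Q are bounded
  set J : Set κ.ord.ToType := {j | g j ∈ Q} with hJ
  have hJle : #↥J ≤ #↥Q := by
    have h1 : #↥J = #↥(g '' J) := (Cardinal.mk_image_eq hginj).symm
    have h2 : g '' J ⊆ Q := by rintro x ⟨j, hj, rfl⟩; exact hj
    rw [h1]; exact Cardinal.mk_le_mk_of_subset h2
  have hJbd : Set.Bounded (· < ·) J := by
    by_contra hnb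
    rw [Set.not_bounded_iff] at hnb
    have hcof : IsCofinal J := fun a => by
      obtain ⟨b, hb, hab⟩ := hnb a
      exact ⟨b, hb, not_lt.1 hab⟩
    have := Order.cof_le hcof
    rw [Ordinal.cof_toType] at this
    exact absurd ((hJle.trans_lt hQcard).trans_le hlt) (not_lt.2 this)
  obtain ⟨j0, hj0⟩ := hJbd
  obtain ⟨i, hiS0, hij0⟩ := hS0unb j0
  have hQXi : Q ⊆ Xi i := by
    intro q hq
    have hqX : q ∈ X := hQX hq
    set j := e.symm ⟨q, hqX⟩ with hj
    have hgj : g j = q := by simp [hg, hj]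
    have hjJ : j ∈ J := by rw [hJ, Set.mem_setOf_eq, hgj]; exact hq
    have : j < i := lt_of_lt_of_le (hj0 j hjJ) hij0
    exact ⟨j, this, hgj⟩
  have hbB : b i ⊆ B := Set.subset_iUnion (fun i : ↥S0 => b ↑i) ⟨i, hiS0⟩
  exact hb2 i Q hQXi hQcard (hbB.trans hQcov)
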